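/- Let H and H′ be probability measures on 𝒳_C × 𝒳_{B′} with H′ = (ν + n)⁻¹ (ν H + Σ_{j=1}^n δ_{x_j}) for points x_1,…,x_n and ν > 0. If H satisfies the point-conditional property (for each c with H_C({c}) > 0, the conditional of the B′-coordinate given C-coordinate equals c is a point mass) and each x_j is in the support structure compatible with H in the sense that whenever x_{jC} = x_{kC} then x_{jB′} = x_{kB′}, and whenever H_C({x_{jC}}) > 0 then x_{jB′} equals the point of concentration of H(·|x_{jC}), then H′ also satisfies the point-conditional property: for each c with H′_C({c}) > 0, the conditional distribution of the B′-coordinate under H′ given C-coordinate c is a point mass. -/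

import Mathlib

open MeasureTheory ENNReal

/-- A probability measure on `𝓧C × 𝓧B'` has the point-conditional property if, at every
atom `c` of the `C`-marginal, the conditional distribution of the `B'`-coordinate is a
point mass. -/
def PointConditional {𝓧C 𝓧B' : Type*} [MeasurableSpace 𝓧C] [MeasurableSpace 𝓧B']
    (H : Measure (𝓧C × 𝓧B')) : Prop :=
  ∀ c : 𝓧C, 0 < H.map Prod.fst {c} →
    ∃ b : 𝓧B', H ({c} ×ˢ {b}) = H.map Prod.fst {c}

/-- Posterior-update stability of the point-conditional property: if `H` has point
conditionals at atoms, and the observations `x₁,…,x_n` are compatible with `H` and with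
each other, then `H' = (ν + n)⁻¹ (ν H + Σ_j δ_{x_j})` also has point conditionals at
atoms. -/
theorem pointConditional_posterior
    {𝓧C 𝓧B' : Type*} [MeasurableSpace 𝓧C] [MeasurableSpace 𝓧B']
    [MeasurableSingletonClass 𝓧C] [MeasurableSingletonClass 𝓧B']
    (H : Measure (𝓧C × 𝓧B')) [IsProbabilityMeasure H]
    (ν : ℝ≥0∞) (hν : 0 < ν) (hν' : ν ≠ ⊤)
    (n : ℕ) (x : Fin n → 𝓧C × 𝓧B')
    (hPC : PointConditional H)
    (hxx : ∀ j k, (x j).1 = (x k).1 → (x j).2 = (x k).2)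
    (hxH : ∀ j, 0 < H.map Prod.fst {(x j).1} →
      H ({(x j).1} ×ˢ {(x j).2}) = H.map Prod.fst {(x j).1}) :
    PointConditional ((ν + n)⁻¹ • (ν • H + ∑ j : Fin n, Measure.dirac (x j))) := by
  classical
  intro c hc
  have hmc : MeasurableSet ({c} : Set 𝓧C) := measurableSet_singleton c
  have eval : ∀ s : Set (𝓧C × 𝓧B'), MeasurableSet s →
      ((ν + n)⁻¹ • (ν • H + ∑ j : Fin n, Measure.dirac (x j))) s
        = (ν + n)⁻¹ * (ν * H s + ∑ j : Fin n, Set.indicator s 1 (x j)) := by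
    intro s hs
    simp [Measure.smul_apply, Measure.add_apply, Measure.finset_sum_apply,
      Measure.dirac_apply' _ hs, smul_eq_mul, mul_add]
  have hmap : ((ν + n)⁻¹ • (ν • H + ∑ j : Fin n, Measure.dirac (x j))).map Prod.fst {c}
      = (ν + n)⁻¹ * (ν * H.map Prod.fst {c} + ∑ j : Fin n, if (x j).1 = c then 1 else 0) := by
    rw [Measure.map_apply measurable_fst hmc, eval _ (measurable_fst hmc),
      ← Measure.map_apply measurable_fst hmc]
    have hsum : (∑ j : Fin n, Set.indicator (Prod.fst ⁻¹' {c}) 1 (x j))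
        = ∑ j : Fin n, if (x j).1 = c then (1:ℝ≥0∞) else 0 :=
      Finset.sum_congr rfl fun j _ => by simp [Set.indicator_apply]
    rw [hsum]
  rw [hmap] at hc
  by_cases hex : ∃ k, (x k).1 = c
  · obtain ⟨k, hk⟩ := hex
    refine ⟨(x k).2, ?_⟩
    rw [hmap, eval _ ((measurableSet_singleton c).prod (measurableSet_singleton (x k).2))]
    have hH : H ({c} ×ˢ {(x k).2}) = H.map Prod.fst {c} := by
      by_cases h0 : H.map Prod.fst {c} = 0
      · rw [h0]
        have hle : H ({c} ×ˢ {(x k).2}) ≤ H (Prod.fst ⁻¹' {c}) := by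
          apply measure_mono; intro p hp; exact hp.1
        rw [← Measure.map_apply measurable_fst hmc, h0] at hle
        exact le_antisymm hle zero_le
      · have := hxH k (by rw [hk]; exact pos_iff_ne_zero.mpr h0)
        rwa [hk] at this
    congr 1
    congr 1
    · rw [hH]
    · refine Finset.sum_congr rfl fun j _ => ?_
      by_cases h : (x j).1 = c
      · rw [if_pos h]
        have hm : x j ∈ ({c} ×ˢ {(x k).2} : Set (𝓧C × 𝓧B')) :=
          ⟨h, hxx j k (h.trans hk.symm)⟩
        exact Set.indicator_of_mem hm 1
      · rw [if_neg h]
        exact Set.indicator_of_notMem (fun hm => h hm.1) 1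
  · push_neg at hex
    have hdz : (∑ j : Fin n, if (x j).1 = c then (1:ℝ≥0∞) else 0) = 0 :=
      Finset.sum_eq_zero fun j _ => by simp [hex j]
    rw [hdz, add_zero] at hc
    have hHpos : 0 < H.map Prod.fst {c} := by
      by_contra h0
      push_neg at h0
      have : H.map Prod.fst {c} = 0 := le_antisymm h0 zero_le
      simp [this] at hc
    obtain ⟨b, hb⟩ := hPC c hHpos
    refine ⟨b, ?_⟩
    rw [hmap, eval _ ((measurableSet_singleton c).prod (measurableSet_singleton b)), hdz]
    congr 1
    congr 1
    · rw [hb]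
    · refine Finset.sum_eq_zero fun j _ => ?_
      exact Set.indicator_of_notMem (fun hm => hex j hm.1) 1
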